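/- For two occurrences x_i and x_j (i < j) of the same repeat in π (2-balanced case): either both are boundaries or neither is; if both are boundaries, then the adjacencies ⟨r(x_i), l(x_{i+1})⟩ and ⟨r(x_{j−1}), l(x_j)⟩ have the same direction, and the adjacencies ⟨r(x_{i−1}), l(x_i)⟩ and ⟨r(x_j), l(x_{j+1})⟩ have the same direction. -/

import Mathlib

open List

variable {α : Type*}

/-- A signed symbol: (name, orientation); `true` means positive. -/
abbrev SSym (α : Type*) := α × Bool

/-- Negation (orientation flip) of a signed symbol. -/
def symNeg (x : SSym α) : SSym α := (x.1, !x.2)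

/-- Left node of an occurrence: a node `(a, true)` denotes the head `aʰ`,
and `(a, false)` denotes the tail `aᵗ`; a positive occurrence contributes
`(aʰ, aᵗ)`, a negative one `(aᵗ, aʰ)`. -/
def lnode (x : SSym α) : SSym α := x

/-- Right node of an occurrence. -/
def rnode (x : SSym α) : SSym α := (x.1, !x.2)

/-- The unordered adjacency between two consecutive occurrences. -/
def adjOf (u v : SSym α) : Multiset (SSym α) := {rnode u, lnode v}

/-- The multiset of adjacencies of a chromosome. -/
def adjMS : List (SSym α) → Multiset (Multiset (SSym α))
  | u :: v :: rest => adjOf u v ::ₘ adjMS (v :: rest)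
  | _ => 0

/-- Reversed and negated form of a segment. -/
def revneg (s : List (SSym α)) : List (SSym α) := (s.map symNeg).reverse

/-- One symmetric reversal: the reversed segment is flanked by a pair of
inverted occurrences of the same repeat. -/
def SymRev (π π' : List (SSym α)) : Prop :=
  ∃ (p m q : List (SSym α)) (x : SSym α),
    π = p ++ x :: m ++ symNeg x :: q ∧
    π' = p ++ x :: revneg m ++ symNeg x :: q

/-- A symmetric reversal performed on the repeat `a`. -/
def SymRevOn (a : α) (π π' : List (SSym α)) : Prop :=
  ∃ (p m q : List (SSym α)) (x : SSym α), x.1 = a ∧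
    π = p ++ x :: m ++ symNeg x :: q ∧
    π' = p ++ x :: revneg m ++ symNeg x :: q

/-- `π` can be transformed into `τ` by a series of symmetric reversals. -/
def Transformable (π τ : List (SSym α)) : Prop := Relation.ReflTransGen SymRev π τ

/-- `π` can be transformed into `τ` by exactly `m` symmetric reversals. -/
def ChainRev : ℕ → List (SSym α) → List (SSym α) → Prop
  | 0, π, τ => π = τ
  | n + 1, π, τ => ∃ π', SymRev π π' ∧ ChainRev n π' τ

/-- A chromosome is flanked by `+r₀` and `-r₀`. -/
def IsChromosome (r₀ : α) (π : List (SSym α)) : Prop :=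
  ∃ m : List (SSym α), π = (r₀, true) :: m ++ [(r₀, false)]

/-- Duplication number of symbol `a` in `π` (occurrences in both orientations). -/
def dpCount [DecidableEq α] (a : α) (π : List (SSym α)) : ℕ := (π.map Prod.fst).count a

/-- Related chromosomes: identical duplication numbers for every gene/repeat. -/
def Related [DecidableEq α] (π τ : List (SSym α)) : Prop := ∀ a, dpCount a π = dpCount a τ

/-- A chromosome is simple if every adjacency appears only once. -/
def Simple [DecidableEq α] (π : List (SSym α)) : Prop := ∀ A, (adjMS π).count A ≤ 1

/-- Deletion of all occurrences of the repeat `b`. -/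
def delSym [DecidableEq α] (b : α) (π : List (SSym α)) : List (SSym α) :=
  π.filter fun x => decide (x.1 ≠ b)

/-- The repeat `a` is neighbor-consistent: the two adjacencies flanking any of its
occurrences in `π` are matched to the two adjacencies flanking a single
occurrence of `a` in `τ`. -/
def NeighborConsistent (π τ : List (SSym α)) (a : α) : Prop :=
  ∀ (p q : List (SSym α)) (u x v : SSym α),
    π = p ++ u :: x :: v :: q → x.1 = a →
    ∃ (p' q' : List (SSym α)) (u' y v' : SSym α),
      τ = p' ++ u' :: y :: v' :: q' ∧ y.1 = a ∧
      ({adjOf u x, adjOf x v} : Multiset (Multiset (SSym α))) =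
        {adjOf u' y, adjOf y v'}

/-- The repeat `a` is black in `IG(π, τ)`: its two occurrences in `π`
have opposite signs. -/
def Black (π : List (SSym α)) (a : α) : Prop :=
  ∃ (p q r : List (SSym α)) (x y : SSym α),
    π = p ++ x :: q ++ y :: r ∧ x.1 = a ∧ y.1 = a ∧ x.2 ≠ y.2

/-- The occurrence intervals of the repeats `a` and `b` interleave in `π`
(the adjacency relation of the intersection graph `IG(π, τ)`). -/
def Interleaves (π : List (SSym α)) (a b : α) : Prop :=
  a ≠ b ∧ ∃ (p q r s t : List (SSym α)) (x y x' y' : SSym α),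
    x.1 = a ∧ x'.1 = a ∧ y.1 = b ∧ y'.1 = b ∧
    (π = p ++ x :: q ++ y :: r ++ x' :: s ++ y' :: t ∨
     π = p ++ y :: q ++ x :: r ++ y' :: s ++ x' :: t)

/-- Two repeats are in the same connected component of the intersection graph. -/
def InSameComponent (π : List (SSym α)) : α → α → Prop :=
  Relation.ReflTransGen (Interleaves π)

/-- An abstract vertex-colored, vertex-weighted graph (intersection graph). -/
structure ColoredGraph (V : Type*) where
  adj : V → V → Prop
  black : V → Prop
  weight : V → ℕ

/-- The effect of performing a symmetric reversal on a black vertex `x`: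
(rule-I) the colors of all neighbors of `x` are toggled; (rule-II) adjacency
among the neighbors of `x` is complemented; (rule-III) the weight of `x`
is decremented (and `x` is deleted when the weight reaches `0`). -/
def reverseAt {V : Type*} [DecidableEq V] (G : ColoredGraph V) (x : V) :
    ColoredGraph V where
  adj u v := (G.adj x u ∧ G.adj x v ∧ ¬ G.adj u v ∧ u ≠ v) ∨
    (¬ (G.adj x u ∧ G.adj x v) ∧ G.adj u v)
  black v := (G.adj x v ∧ ¬ G.black v) ∨ (¬ G.adj x v ∧ G.black v)
  weight v := if v = x then G.weight v - 1 else G.weight v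

/-- Reachability in a colored graph avoiding deleted (`dead`) vertices. -/
def Reach {V : Type*} (G : ColoredGraph V) (dead : V → Prop) : V → V → Prop :=
  Relation.ReflTransGen (fun u v => G.adj u v ∧ ¬ dead u ∧ ¬ dead v)

/-- The 2-balanced condition: any two occurrences of the same repeat in `τ`
have opposite signs. -/
def BalancedTarget (τ : List (SSym α)) : Prop :=
  ∀ (p q r : List (SSym α)) (x y : SSym α),
    τ = p ++ x :: q ++ y :: r → x.1 = y.1 → x.2 ≠ y.2

/-- The adjacency `⟨u, v⟩` of `π` is positive: it is matched to an adjacency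
`⟨y_j, y_{j+1}⟩` of `τ` with `r(u) = r(y_j)` and `l(v) = l(y_{j+1})`, i.e.
`τ` contains the consecutive pair `u v` literally. -/
def PosIn (τ : List (SSym α)) (u v : SSym α) : Prop :=
  ∃ p q : List (SSym α), τ = p ++ u :: v :: q

/-- The adjacency `⟨u, v⟩` of `π` is negative: `τ` contains its reversed and
negated form. -/
def NegIn (τ : List (SSym α)) (u v : SSym α) : Prop := PosIn τ (symNeg v) (symNeg u)

/-- Positive and not entangled. -/
def StrictPos (τ : List (SSym α)) (u v : SSym α) : Prop := PosIn τ u v ∧ ¬ NegIn τ u v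

/-- Negative and not entangled. -/
def StrictNeg (τ : List (SSym α)) (u v : SSym α) : Prop := NegIn τ u v ∧ ¬ PosIn τ u v

/-- An entangled adjacency can be read both positively and negatively. -/
def EntangledAdj (τ : List (SSym α)) (u v : SSym α) : Prop := PosIn τ u v ∧ NegIn τ u v

/-- The occurrence `x` (with left neighbor `w` and right neighbor `v`) is a
boundary: its left and right adjacencies have distinct directions. -/
def IsBoundary (τ : List (SSym α)) (w x v : SSym α) : Prop :=
  (StrictPos τ w x ∧ StrictNeg τ x v) ∨ (StrictNeg τ w x ∧ StrictPos τ x v)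

/-- The list of consecutive pairs (adjacencies) of a chromosome. -/
def pairsOf (π : List (SSym α)) : List (SSym α × SSym α) := π.zip π.tail

/-- A direction assignment (`true` = positive) compatible with the bijection
between the adjacencies of `π` and `τ`. -/
def DirOK (τ π : List (SSym α)) (d : List Bool) : Prop :=
  List.Forall₂ (fun (pr : SSym α × SSym α) (b : Bool) =>
    (b = true → PosIn τ pr.1 pr.2) ∧ (b = false → NegIn τ pr.1 pr.2)) (pairsOf π) d

/-- Number of maximal `false`-runs (maximal negative segments). -/
def nMNSAux : Bool → List Bool → ℕ
  | _, [] => 0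
  | prev, b :: rest => (if prev = true ∧ b = false then 1 else 0) + nMNSAux b rest

def nMNS (d : List Bool) : ℕ := nMNSAux true d

/-- `N_MNS[π]`: the number of maximal negative segments of `π` relative to `τ`
(entangled adjacencies assigned so that the number of MNS is minimized,
i.e. taking the common direction of their neighbors). -/
noncomputable def NMNS (π τ : List (SSym α)) : ℕ :=
  sInf { n | ∃ d : List Bool, DirOK τ π d ∧ n = nMNS d }

/-- A node position of the alternative-cycle graph: `(i, false)` is the left
node of the `i`-th occurrence of `π`, `(i, true)` its right node. -/
abbrev NodePos := ℕ × Bool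

/-- The value (as a node of the form `aʰ`/`aᵗ`) sitting at a node position. -/
def nodeVal (π : List (SSym α)) (p : NodePos) : Option (SSym α) :=
  (π[p.1]?).map fun x => if p.2 then rnode x else lnode x

/-- The adjacency of `π` between positions `i` and `i+1`, if any. -/
def adjAt (π : List (SSym α)) (i : ℕ) : Option (Multiset (SSym α)) :=
  match π[i]?, π[i+1]? with
  | some u, some v => some (adjOf u v)
  | _, _ => none

/-- `f` is a bijection matching each adjacency of `τ` with an identical
adjacency of `π`. -/
def AdjBijection (π τ : List (SSym α)) (f : ℕ → ℕ) : Prop :=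
  Set.BijOn f (Set.Iio (τ.length - 1)) (Set.Iio (π.length - 1)) ∧
  ∀ k < τ.length - 1, adjAt τ k = adjAt π (f k)

/-- The blue edge of `ACG(π, τ, f)` corresponding to the `k`-th occurrence of
`τ`: it joins the node of the `f`-image of the adjacency on the left of `y_k`
carrying the value `l(y_k)` with the node of the `f`-image of the adjacency on
the right of `y_k` carrying the value `r(y_k)`. -/
def IsBlueEdge (π τ : List (SSym α)) (f : ℕ → ℕ) (k : ℕ) (e₁ e₂ : NodePos) : Prop :=
  ∃ y : SSym α, τ[k]? = some y ∧
    (if k = 0 then e₁ = (0, false)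
     else (e₁ = (f (k-1), true) ∨ e₁ = (f (k-1) + 1, false)) ∧
       nodeVal π e₁ = some (lnode y)) ∧
    (if k = τ.length - 1 then e₂ = (π.length - 1, true)
     else (e₂ = (f k, true) ∨ e₂ = (f k + 1, false)) ∧
       nodeVal π e₂ = some (rnode y))

/-- A green edge joins `r(x_i)` and `l(x_{i+1})` (an adjacency of `π`). -/
def GreenEdge (p q : NodePos) : Prop :=
  (p.2 = true ∧ q = (p.1 + 1, false)) ∨ (q.2 = true ∧ p = (q.1 + 1, false))

/-- A step along a blue or a green edge. -/
def BGStep (π τ : List (SSym α)) (f : ℕ → ℕ) (p q : NodePos) : Prop :=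
  GreenEdge p q ∨ ∃ k, IsBlueEdge π τ f k p q ∨ IsBlueEdge π τ f k q p


@[simp] lemma symNeg_symNeg (x : SSym α) : symNeg (symNeg x) = x := by simp [symNeg]
lemma symNeg_fst (x : SSym α) : (symNeg x).1 = x.1 := rfl
lemma symNeg_inj {u v : SSym α} (h : symNeg u = symNeg v) : u = v := by
  have := congrArg symNeg h; simpa using this
lemma symNeg_ne (x : SSym α) : symNeg x ≠ x := by
  intro h; have := congrArg Prod.snd h; simp [symNeg] at this
lemma adjOf_def (u v : SSym α) : adjOf u v = {symNeg u, v} := rfl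
lemma adjOf_swap (u v : SSym α) : adjOf (symNeg v) (symNeg u) = adjOf u v := by
  simp only [adjOf, rnode, lnode]
  show ({symNeg (symNeg v), symNeg u} : Multiset (SSym α)) = {symNeg u, v}
  rw [symNeg_symNeg, Multiset.pair_comm]

lemma pair_eq {a b c d : β} (h : ({a, b} : Multiset β) = {c, d}) :
    (a = c ∧ b = d) ∨ (a = d ∧ b = c) := by
  have : a ::ₘ {b} = c ::ₘ {d} := h
  rcases Multiset.cons_eq_cons.1 this with ⟨rfl, h2⟩ | ⟨hne, cs, h1, h2⟩
  · exact Or.inl ⟨rfl, Multiset.singleton_inj.1 h2⟩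
  · obtain ⟨hbc, rfl⟩ := (Multiset.singleton_eq_cons_iff _).1 h1
    obtain ⟨hda, -⟩ := (Multiset.singleton_eq_cons_iff _).1 h2
    exact Or.inr ⟨hda.symm, hbc⟩

lemma adjOf_eq {u v u' v' : SSym α} (h : adjOf u v = adjOf u' v') :
    (u = u' ∧ v = v') ∨ (u = symNeg v' ∧ v = symNeg u') := by
  rw [adjOf_def, adjOf_def] at h
  rcases pair_eq h with ⟨h1, h2⟩ | ⟨h1, h2⟩
  · exact Or.inl ⟨symNeg_inj h1, h2⟩
  · right
    constructor
    · have := congrArg symNeg h1; simpa using this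
    · rw [h2]

lemma adjMS_nil : adjMS ([] : List (SSym α)) = 0 := rfl
lemma adjMS_single (u : SSym α) : adjMS [u] = 0 := rfl
lemma adjMS_cons_cons (u v : SSym α) (rest : List (SSym α)) :
    adjMS (u :: v :: rest) = adjOf u v ::ₘ adjMS (v :: rest) := rfl

lemma adjMS_glue : ∀ (p : List (SSym α)) (u : SSym α) (rest : List (SSym α)),
    adjMS (p ++ u :: rest) = adjMS (p ++ [u]) + adjMS (u :: rest)
  | [], u, rest => by simp [adjMS_single]
  | [b], u, rest => by
      simp only [List.cons_append, List.nil_append, adjMS_cons_cons, adjMS_single]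
      rw [Multiset.cons_add, zero_add]
  | b :: c :: p, u, rest => by
      have ih := adjMS_glue (c :: p) u rest
      simp only [List.cons_append] at ih ⊢
      rw [adjMS_cons_cons, adjMS_cons_cons, ih, Multiset.cons_add]

lemma mem_adjMS_intro : ∀ (p : List (SSym α)) (u v : SSym α) (q : List (SSym α)),
    adjOf u v ∈ adjMS (p ++ u :: v :: q)
  | [], u, v, q => Multiset.mem_cons_self _ _
  | [b], u, v, q => Multiset.mem_cons_of_mem (mem_adjMS_intro [] u v q)
  | b :: c :: p, u, v, q => Multiset.mem_cons_of_mem (mem_adjMS_intro (c :: p) u v q)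

lemma mem_adjMS_elim : ∀ {l : List (SSym α)} {A : Multiset (SSym α)}, A ∈ adjMS l →
    ∃ p q u v, l = p ++ u :: v :: q ∧ A = adjOf u v
  | [], A, h => by simp [adjMS_nil] at h
  | [u], A, h => by simp [adjMS_single] at h
  | u :: v :: rest, A, h => by
      rw [adjMS_cons_cons, Multiset.mem_cons] at h
      rcases h with rfl | h
      · exact ⟨[], rest, u, v, rfl, rfl⟩
      · obtain ⟨p, q, u', v', hl, hA⟩ := mem_adjMS_elim h
        exact ⟨u :: p, q, u', v', by rw [List.cons_append, ← hl], hA⟩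

lemma align {e : β} : ∀ (s1 s2 t1 t2 : List β), s1 ++ e :: t1 = s2 ++ e :: t2 →
    e ∉ s1 → e ∉ s2 → s1 = s2 ∧ t1 = t2
  | [], [], t1, t2, h, _, _ => ⟨rfl, by simpa using h⟩
  | [], b :: s2, t1, t2, h, _, h2 => by
      simp only [List.nil_append, List.cons_append, List.cons.injEq] at h
      exact absurd (h.1 ▸ (List.mem_cons_self (a := b) (l := s2))) h2
  | b :: s1, [], t1, t2, h, h1, _ => by
      simp only [List.nil_append, List.cons_append, List.cons.injEq] at h
      exact absurd (h.1.symm ▸ (List.mem_cons_self (a := b) (l := s1))) h1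
  | b :: s1, c :: s2, t1, t2, h, h1, h2 => by
      simp only [List.cons_append, List.cons.injEq] at h
      obtain ⟨rfl, h⟩ := h
      obtain ⟨h3, h4⟩ := align s1 s2 t1 t2 h (fun hm => h1 (List.mem_cons_of_mem _ hm))
        (fun hm => h2 (List.mem_cons_of_mem _ hm))
      exact ⟨by rw [h3], h4⟩

lemma uniq_of_count_one [BEq β] [LawfulBEq β] {e : β} {l s1 t1 s2 t2 : List β}
    (hc : l.count e = 1) (h1 : l = s1 ++ e :: t1) (h2 : l = s2 ++ e :: t2) :
    s1 = s2 ∧ t1 = t2 := by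
  have k1 : e ∉ s1 := by
    intro hm
    have hp : 0 < s1.count e := List.count_pos_iff.2 hm
    rw [h1] at hc; simp [List.count_append, List.count_cons] at hc; omega
  have k2 : e ∉ s2 := by
    intro hm
    have hp : 0 < s2.count e := List.count_pos_iff.2 hm
    rw [h2] at hc; simp [List.count_append, List.count_cons] at hc; omega
  exact align s1 s2 t1 t2 (h1.symm.trans h2) k1 k2

lemma count_ge_two [DecidableEq α] {l p1 p2 q1 q2 : List (SSym α)} {u1 v1 u2 v2 : SSym α}
    (h1 : l = p1 ++ u1 :: v1 :: q1) (h2 : l = p2 ++ u2 :: v2 :: q2)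
    (hlt : p1.length < p2.length) (he : adjOf u1 v1 = adjOf u2 v2) :
    2 ≤ (adjMS l).count (adjOf u1 v1) := by
  have h3 : (p1 ++ [u1]) ++ v1 :: q1 = p2 ++ u2 :: v2 :: q2 := by
    rw [← h2, h1]; simp
  have h4 := congrArg (List.drop (p1.length + 1)) h3
  rw [List.drop_left' (by simp)] at h4
  rw [List.drop_append] at h4
  have hz : p1.length + 1 - p2.length = 0 := by omega
  rw [hz, List.drop_zero] at h4
  have hmem := mem_adjMS_intro (p2.drop (p1.length + 1)) u2 v2 q2
  rw [← h4, ← he] at hmem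
  have hone : 1 ≤ (adjMS (v1 :: q1)).count (adjOf u1 v1) :=
    Multiset.one_le_count_iff_mem.2 hmem
  rw [h1, adjMS_glue p1 u1 (v1 :: q1), adjMS_cons_cons]
  rw [Multiset.count_add, Multiset.count_cons_self]
  omega


lemma exists_split_one [DecidableEq α] {a : α} : ∀ {l : List (SSym α)},
    (l.map Prod.fst).count a = 1 → ∃ t z t', l = t ++ z :: t' ∧ z.1 = a ∧
      (∀ u ∈ t, u.1 ≠ a) ∧ (∀ u ∈ t', u.1 ≠ a)
  | [], h => by simp at h
  | u :: l, h => by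
      simp only [List.map_cons, List.count_cons] at h
      by_cases hu : u.1 = a
      · have hb : (u.1 == a) = true := beq_iff_eq.2 hu
        have h0 : (l.map Prod.fst).count a = 0 := by
          rw [hb, if_pos rfl] at h; omega
        refine ⟨[], u, l, rfl, hu, by simp, fun z hz hza => ?_⟩
        have : a ∈ l.map Prod.fst := List.mem_map.2 ⟨z, hz, hza⟩
        rw [← List.count_pos_iff] at this; omega
      · have hb : (u.1 == a) = false := beq_eq_false_iff_ne.2 hu
        have h1 : (l.map Prod.fst).count a = 1 := by
          rw [hb, if_neg (by simp)] at h; omega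
        obtain ⟨t, z, t', hl, hz, ht, ht'⟩ := exists_split_one h1
        refine ⟨u :: t, z, t', by rw [List.cons_append, hl], hz, ?_, ht'⟩
        intro z' hz'
        rcases List.mem_cons.1 hz' with rfl | hm
        · exact hu
        · exact ht z' hm

lemma exists_split_two [DecidableEq α] {a : α} : ∀ {l : List (SSym α)},
    (l.map Prod.fst).count a = 2 →
    ∃ t1 z t2 z' t3, l = t1 ++ z :: t2 ++ z' :: t3 ∧ z.1 = a ∧ z'.1 = a ∧
      (∀ u ∈ t1, u.1 ≠ a) ∧ (∀ u ∈ t2, u.1 ≠ a) ∧ (∀ u ∈ t3, u.1 ≠ a)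
  | [], h => by simp at h
  | u :: l, h => by
      simp only [List.map_cons, List.count_cons] at h
      by_cases hu : u.1 = a
      · have hb : (u.1 == a) = true := beq_iff_eq.2 hu
        have h1 : (l.map Prod.fst).count a = 1 := by
          rw [hb, if_pos rfl] at h; omega
        obtain ⟨t, z, t', hl, hz, ht, ht'⟩ := exists_split_one h1
        exact ⟨[], u, t, z, t', by simp [hl, List.append_assoc], hu, hz, by simp, ht, ht'⟩
      · have hb : (u.1 == a) = false := beq_eq_false_iff_ne.2 hu
        have h2 : (l.map Prod.fst).count a = 2 := by
          rw [hb, if_neg (by simp)] at h; omega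
        obtain ⟨t1, z, t2, z', t3, hl, hz, hz', h1, h2', h3⟩ := exists_split_two h2
        refine ⟨u :: t1, z, t2, z', t3, by simp [hl, List.append_assoc], hz, hz', ?_, h2', h3⟩
        intro z'' hz''
        rcases List.mem_cons.1 hz'' with rfl | hm
        · exact hu
        · exact h1 z'' hm

lemma posOrNeg {τ : List (SSym α)} {u v : SSym α} (h : adjOf u v ∈ adjMS τ) :
    PosIn τ u v ∨ NegIn τ u v := by
  obtain ⟨p, q, u', v', hτ, hadj⟩ := mem_adjMS_elim h
  rcases adjOf_eq hadj with ⟨rfl, rfl⟩ | ⟨h1, h2⟩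
  · exact Or.inl ⟨p, q, hτ⟩
  · refine Or.inr ⟨p, q, ?_⟩
    have hu' : u' = symNeg v := by
      have := congrArg symNeg h2; simpa using this.symm
    have hv' : v' = symNeg u := by
      have := congrArg symNeg h1; simpa using this.symm
    rw [hτ, hu', hv']

lemma not_pos_and_neg [DecidableEq α] {τ : List (SSym α)} (hst : Simple τ)
    {u v : SSym α} (hne : u ≠ symNeg v) : ¬(PosIn τ u v ∧ NegIn τ u v) := by
  rintro ⟨⟨p1, q1, h1⟩, ⟨p2, q2, h2⟩⟩
  have he : adjOf u v = adjOf (symNeg v) (symNeg u) := (adjOf_swap u v).symm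
  rcases lt_trichotomy p1.length p2.length with hlt | heq | hgt
  · have := count_ge_two h1 h2 hlt he
    have := hst (adjOf u v); omega
  · have h3 := h1.symm.trans h2
    obtain ⟨-, h4⟩ := List.append_inj h3 (by omega)
    exact hne (by injection h4)
  · have := count_ge_two h2 h1 hgt he.symm
    rw [← he] at this
    have := hst (adjOf u v); omega


set_option maxHeartbeats 1000000 in
/-- two occurrences of the same repeat are either both
boundaries or neither; if both, the right adjacency of the first and the left
adjacency of the second have the same direction, as do the left adjacency of
the first and the right adjacency of the second. -/
theorem boundary_pairing [DecidableEq α] (r₀ : α)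
    (π τ : List (SSym α)) (hπ : IsChromosome r₀ π) (hτ : IsChromosome r₀ τ)
    (hs : Simple π) (hst : Simple τ) (hrel : Related π τ)
    (hdpπ : ∀ c, dpCount c π ≤ 2) (hdpτ : ∀ c, dpCount c τ ≤ 2)
    (hbal : BalancedTarget τ) (hA : adjMS π = adjMS τ)
    (p q r : List (SSym α)) (w x v w' y v' : SSym α)
    (hdec : π = p ++ w :: x :: v :: q ++ w' :: y :: v' :: r)
    (hxy : x.1 = y.1) :
    (IsBoundary τ w x v ↔ IsBoundary τ w' y v') ∧
    (IsBoundary τ w x v → IsBoundary τ w' y v' →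
      ((StrictPos τ x v ↔ StrictPos τ w' y) ∧
       (StrictPos τ w x ↔ StrictPos τ y v'))) := by
  clear hπ hτ hdpτ
  -- occurrence-name facts in π
  have hcnt : (π.map Prod.fst).count x.1 ≤ 2 := hdpπ x.1
  have hmap : π.map Prod.fst = p.map Prod.fst ++ w.1 :: x.1 :: v.1 ::
      (q.map Prod.fst ++ w'.1 :: y.1 :: v'.1 :: r.map Prod.fst) := by
    rw [hdec]; simp
  rw [hmap] at hcnt
  simp only [List.count_append, List.count_cons, beq_iff_eq, hxy.symm, if_pos rfl,
    eq_self_iff_true, if_true] at hcnt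
  have hw1 : w.1 ≠ x.1 := by intro h; simp [h] at hcnt; omega
  have hv1 : v.1 ≠ x.1 := by intro h; simp [h] at hcnt; omega
  have hw'1 : w'.1 ≠ x.1 := by intro h; simp [h] at hcnt; omega
  have hv'1 : v'.1 ≠ x.1 := by intro h; simp [h] at hcnt; omega
  simp only [if_neg hw1, if_neg hv1, if_neg hw'1, if_neg hv'1] at hcnt
  have hπ2 : (π.map Prod.fst).count x.1 = 2 := by
    rw [hmap]
    simp only [List.count_append, List.count_cons, beq_iff_eq, hxy.symm, if_pos rfl,
      eq_self_iff_true, if_true, if_neg hw1, if_neg hv1, if_neg hw'1, if_neg hv'1]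
    omega
  -- structure of τ
  have hτ2 : (τ.map Prod.fst).count x.1 = 2 := by
    have := hrel x.1
    have h1 : dpCount x.1 π = (π.map Prod.fst).count x.1 := rfl
    have h2 : dpCount x.1 τ = (τ.map Prod.fst).count x.1 := rfl
    rw [h1, h2] at this
    omega
  obtain ⟨t1, z, t2, z', t3, hτd, hz, hz', hf1, hf2, hf3⟩ := exists_split_two hτ2
  have hzz : z' = symNeg z := by
    have hne : z.2 ≠ z'.2 := hbal _ _ _ _ _ hτd (hz.trans hz'.symm)
    have hfst : z'.1 = z.1 := hz'.trans hz.symm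
    have hsnd : z'.2 = !z.2 := by
      rcases Bool.eq_false_or_eq_true z.2 with h1 | h1 <;>
        rcases Bool.eq_false_or_eq_true z'.2 with h2 | h2 <;>
        rw [h1, h2] <;> try rfl
      · exact absurd (h1.trans h2.symm) hne
      · exact absurd (h1.trans h2.symm) hne
    exact Prod.ext hfst hsnd
  rw [hzz] at hτd
  -- each of x, symNeg x occurs exactly once in τ
  have hxz : x = z ∨ x = symNeg z := by
    by_cases h2 : x.2 = z.2
    · exact Or.inl (Prod.ext hz.symm h2)
    · refine Or.inr (Prod.ext hz.symm ?_)
      show x.2 = !z.2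
      rcases Bool.eq_false_or_eq_true z.2 with h3 | h3 <;>
        rcases Bool.eq_false_or_eq_true x.2 with h4 | h4 <;>
        rw [h3, h4] <;> try rfl
      · exact absurd (h4.trans h3.symm) h2
      · exact absurd (h4.trans h3.symm) h2
  have ht1x : t1.count x = 0 ∧ t1.count (symNeg x) = 0 := by
    constructor <;> refine List.count_eq_zero.2 (fun hm => ?_)
    · exact hf1 x hm rfl
    · exact hf1 (symNeg x) hm rfl
  have ht2x : t2.count x = 0 ∧ t2.count (symNeg x) = 0 := by
    constructor <;> refine List.count_eq_zero.2 (fun hm => ?_)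
    · exact hf2 x hm rfl
    · exact hf2 (symNeg x) hm rfl
  have ht3x : t3.count x = 0 ∧ t3.count (symNeg x) = 0 := by
    constructor <;> refine List.count_eq_zero.2 (fun hm => ?_)
    · exact hf3 x hm rfl
    · exact hf3 (symNeg x) hm rfl
  have hcx : τ.count x = 1 ∧ τ.count (symNeg x) = 1 := by
    rcases hxz with hxs | hxs
    · rw [hτd, ← hxs]
      constructor <;>
        simp [List.count_append, List.count_cons, ht1x.1, ht1x.2, ht2x.1, ht2x.2,
          ht3x.1, ht3x.2, symNeg_ne x, Ne.symm (symNeg_ne x)]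
    · have hzx : z = symNeg x := by rw [hxs]; simp
      rw [hτd, hzx]
      constructor <;>
        simp [List.count_append, List.count_cons, ht1x.1, ht1x.2, ht2x.1, ht2x.2,
          ht3x.1, ht3x.2, symNeg_ne x, Ne.symm (symNeg_ne x)]
  -- uniqueness of decompositions at x and symNeg x
  have uX : ∀ {s1 t1' s2 t2' : List (SSym α)}, τ = s1 ++ x :: t1' → τ = s2 ++ x :: t2' →
      s1 = s2 ∧ t1' = t2' := fun h1 h2 => uniq_of_count_one hcx.1 h1 h2
  have uNX : ∀ {s1 t1' s2 t2' : List (SSym α)}, τ = s1 ++ symNeg x :: t1' →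
      τ = s2 ++ symNeg x :: t2' → s1 = s2 ∧ t1' = t2' :=
    fun h1 h2 => uniq_of_count_one hcx.2 h1 h2
  -- the four adjacencies of π around x and y, as members of adjMS τ
  have hd1 : π = p ++ w :: x :: (v :: q ++ w' :: y :: v' :: r) := by rw [hdec]; try simp
  have hd2 : π = (p ++ [w]) ++ x :: v :: (q ++ w' :: y :: v' :: r) := by rw [hdec]; try simp
  have hd3 : π = (p ++ w :: x :: v :: q) ++ w' :: y :: (v' :: r) := by rw [hdec]; try simp
  have hd4 : π = (p ++ w :: x :: v :: q ++ [w']) ++ y :: v' :: r := by rw [hdec]; try simp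
  have hm1 : adjOf w x ∈ adjMS τ := by rw [← hA, hd1]; exact mem_adjMS_intro p w x _
  have hm2 : adjOf x v ∈ adjMS τ := by rw [← hA, hd2]; exact mem_adjMS_intro _ x v _
  have hm3 : adjOf w' y ∈ adjMS τ := by rw [← hA, hd3]; exact mem_adjMS_intro _ w' y _
  have hm4 : adjOf y v' ∈ adjMS τ := by rw [← hA, hd4]; exact mem_adjMS_intro _ y v' _
  have O1 := posOrNeg hm1
  have O2 := posOrNeg hm2
  have O3 := posOrNeg hm3
  have O4 := posOrNeg hm4
  have X1 : ¬(PosIn τ w x ∧ NegIn τ w x) :=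
    not_pos_and_neg hst (fun h => hw1 (by rw [h]; rfl))
  have X2 : ¬(PosIn τ x v ∧ NegIn τ x v) :=
    not_pos_and_neg hst (fun h => hv1 (by rw [h]; rfl))
  have X3 : ¬(PosIn τ w' y ∧ NegIn τ w' y) :=
    not_pos_and_neg hst (fun h => hw'1 (by rw [h]; exact hxy.symm))
  have X4 : ¬(PosIn τ y v' ∧ NegIn τ y v') :=
    not_pos_and_neg hst (fun h => hv'1 (by
      have h2 := congrArg Prod.fst h
      rw [symNeg_fst] at h2
      rw [← h2]; exact hxy.symm))
  -- no adjacency of π can be matched twice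
  have hπ2cnt : ∀ {P1 Q1 P2 Q2 : List (SSym α)} {u1 v1 u2 v2 : SSym α},
      π = P1 ++ u1 :: v1 :: Q1 → π = P2 ++ u2 :: v2 :: Q2 → P1.length < P2.length →
      adjOf u1 v1 = adjOf u2 v2 → False := by
    intro P1 Q1 P2 Q2 u1 v1 u2 v2 h1 h2 hlt he
    have h2c := count_ge_two h1 h2 hlt he
    have := hs (adjOf u1 v1)
    omega
  have hyx : y = x ∨ y = symNeg x := by
    by_cases h2 : y.2 = x.2
    · exact Or.inl (Prod.ext hxy.symm h2)
    · refine Or.inr (Prod.ext hxy.symm ?_)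
      show y.2 = !x.2
      rcases Bool.eq_false_or_eq_true x.2 with h3 | h3 <;>
        rcases Bool.eq_false_or_eq_true y.2 with h4 | h4 <;>
        rw [h3, h4] <;> try rfl
      · exact absurd (h4.trans h3.symm) h2
      · exact absurd (h4.trans h3.symm) h2
  have hlen13 : p.length < (p ++ w :: x :: v :: q).length := by simp
  have hlen14 : p.length < (p ++ w :: x :: v :: q ++ [w']).length := by simp
  have hlen23 : (p ++ [w]).length < (p ++ w :: x :: v :: q).length := by simp
  have hlen24 : (p ++ [w]).length < (p ++ w :: x :: v :: q ++ [w']).length := by simp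
  rcases hyx with hcase | hcase
  · -- y = x : opposite directions pair up
    subst hcase
    have CA1 : ¬(PosIn τ w y ∧ PosIn τ w' y) := by
      rintro ⟨⟨p1, q1, e1⟩, ⟨p2, q2, e2⟩⟩
      obtain ⟨hpre, -⟩ := uX (show τ = (p1 ++ [w]) ++ y :: q1 by rw [e1]; simp)
        (show τ = (p2 ++ [w']) ++ y :: q2 by rw [e2]; simp)
      obtain ⟨-, hww⟩ := List.append_inj' hpre rfl
      have hww : w = w' := by injection hww
      exact hπ2cnt hd1 hd3 hlen13 (by rw [hww])
    have CA2 : ¬(NegIn τ w y ∧ NegIn τ w' y) := by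
      rintro ⟨⟨p1, q1, e1⟩, ⟨p2, q2, e2⟩⟩
      obtain ⟨-, htl⟩ := uNX e1 e2
      have hww : w = w' := symNeg_inj (by injection htl)
      exact hπ2cnt hd1 hd3 hlen13 (by rw [hww])
    have CA3 : ¬(PosIn τ y v ∧ PosIn τ y v') := by
      rintro ⟨⟨p1, q1, e1⟩, ⟨p2, q2, e2⟩⟩
      obtain ⟨-, htl⟩ := uX e1 e2
      have hvv : v = v' := by injection htl
      exact hπ2cnt hd2 hd4 hlen24 (by rw [hvv])
    have CA4 : ¬(NegIn τ y v ∧ NegIn τ y v') := by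
      rintro ⟨⟨p1, q1, e1⟩, ⟨p2, q2, e2⟩⟩
      obtain ⟨hpre, -⟩ := uNX (show τ = (p1 ++ [symNeg v]) ++ symNeg y :: q1 by rw [e1]; simp)
        (show τ = (p2 ++ [symNeg v']) ++ symNeg y :: q2 by rw [e2]; simp)
      obtain ⟨-, hvv⟩ := List.append_inj' hpre rfl
      have hvv : v = v' := symNeg_inj (by injection hvv)
      exact hπ2cnt hd2 hd4 hlen24 (by rw [hvv])
    clear hπ2cnt hs hst hA hrel hdpπ hbal hcnt hmap hd1 hd2 hd3 hd4 hm1 hm2 hm3 hm4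
    clear hπ2 hτ2 hτd hf1 hf2 hf3 ht1x ht2x ht3x hcx uX uNX hxz hzz
    simp only [IsBoundary, StrictPos, StrictNeg]
    itauto
  · -- y = symNeg x : directions pair up crosswise
    subst hcase
    have CB1 : ¬(PosIn τ x v ∧ NegIn τ w' (symNeg x)) := by
      rintro ⟨⟨p1, q1, e1⟩, ⟨p2, q2, e2⟩⟩
      rw [show symNeg (symNeg x) = x from by simp] at e2
      obtain ⟨-, htl⟩ := uX e1 e2
      have hv : v = symNeg w' := by injection htl
      refine hπ2cnt hd2 hd3 hlen23 ?_
      rw [hv, ← adjOf_swap w' (symNeg x), symNeg_symNeg]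
    have CB2 : ¬(NegIn τ x v ∧ PosIn τ w' (symNeg x)) := by
      rintro ⟨⟨p1, q1, e1⟩, ⟨p2, q2, e2⟩⟩
      obtain ⟨hpre, -⟩ := uNX (show τ = (p1 ++ [symNeg v]) ++ symNeg x :: q1 by rw [e1]; simp)
        (show τ = (p2 ++ [w']) ++ symNeg x :: q2 by rw [e2]; simp)
      obtain ⟨-, hvv⟩ := List.append_inj' hpre rfl
      have hv : symNeg v = w' := by injection hvv
      refine hπ2cnt hd2 hd3 hlen23 ?_
      rw [← hv, ← adjOf_swap (symNeg v) (symNeg x), symNeg_symNeg, symNeg_symNeg]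
    have CB3 : ¬(PosIn τ w x ∧ NegIn τ (symNeg x) v') := by
      rintro ⟨⟨p1, q1, e1⟩, ⟨p2, q2, e2⟩⟩
      rw [show symNeg (symNeg x) = x from by simp] at e2
      obtain ⟨hpre, -⟩ := uX (show τ = (p1 ++ [w]) ++ x :: q1 by rw [e1]; simp)
        (show τ = (p2 ++ [symNeg v']) ++ x :: q2 by rw [e2]; simp)
      obtain ⟨-, hwv⟩ := List.append_inj' hpre rfl
      have hw : w = symNeg v' := by injection hwv
      refine hπ2cnt hd1 hd4 hlen14 ?_
      have hv' : v' = symNeg w := by rw [hw]; simp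
      rw [hv', ← adjOf_swap w x]
    have CB4 : ¬(NegIn τ w x ∧ PosIn τ (symNeg x) v') := by
      rintro ⟨⟨p1, q1, e1⟩, ⟨p2, q2, e2⟩⟩
      obtain ⟨-, htl⟩ := uNX e1 e2
      have hv' : symNeg w = v' := by injection htl
      refine hπ2cnt hd1 hd4 hlen14 ?_
      rw [← hv', ← adjOf_swap w x]
    simp only [IsBoundary, StrictPos, StrictNeg]
    itauto
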